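/- For every finite simple graph G of order n ≥ 1, the graphs G ∘ P₃ and H_{2n} have the same domination polynomial, namely D(G ∘ P₃, x) = (x⁴ + 4x³ + 6x² + 2x)^n = D(H_{2n}, x). -/

import Mathlib

open Polynomial

variable {V W : Type*}

/-- `S` is a dominating set of `G`. -/
def Dominates (G : SimpleGraph V) (S : Finset V) : Prop :=
  ∀ v, v ∉ S → ∃ u ∈ S, G.Adj u v

open Classical in
/-- The domination polynomial of a finite simple graph. -/
noncomputable def domPoly [Fintype V] (G : SimpleGraph V) : Polynomial ℤ :=
  ∑ S : Finset V, if Dominates G S then (X : Polynomial ℤ) ^ S.card else 0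

/-- The corona `G ∘ H`. -/
def corona (G : SimpleGraph V) (H : SimpleGraph W) : SimpleGraph (V ⊕ V × W) where
  Adj x y :=
    match x, y with
    | Sum.inl a, Sum.inl b => G.Adj a b
    | Sum.inl a, Sum.inr (b, _) => a = b
    | Sum.inr (b, _), Sum.inl a => a = b
    | Sum.inr (a, w), Sum.inr (b, w') => a = b ∧ H.Adj w w'
  symm := by
    constructor
    rintro (a | ⟨a, w⟩) (b | ⟨b, w'⟩) h
    · exact G.adj_symm h
    · exact h
    · exact h
    · exact ⟨h.1.symm, H.adj_symm h.2⟩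
  loopless := by
    constructor
    rintro (a | ⟨a, w⟩) h
    · exact G.irrefl h
    · exact H.irrefl h.2

/-- Stevanović's clique cover construction `C{G}`. -/
def cliqueCoverConstruction (G : SimpleGraph V) {k : ℕ} (C : Fin k → Finset V) :
    SimpleGraph (V ⊕ Fin k × Fin 2) where
  Adj x y :=
    match x, y with
    | Sum.inl a, Sum.inl b => G.Adj a b
    | Sum.inl a, Sum.inr (i, _) => a ∈ C i
    | Sum.inr (i, _), Sum.inl a => a ∈ C i
    | Sum.inr _, Sum.inr _ => False
  symm := by
    constructor
    rintro (a | ⟨i, t⟩) (b | ⟨j, s⟩) h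
    · exact G.adj_symm h
    · exact h
    · exact h
    · exact h.elim
  loopless := by
    constructor
    rintro (a | ⟨i, t⟩) h
    · exact G.irrefl h
    · exact h

/-- clique cover of the even path -/
def evenCover (n : ℕ) : Fin n → Finset (Fin (2 * n)) :=
  fun i => {⟨2 * i.val, by have := i.isLt; omega⟩, ⟨2 * i.val + 1, by have := i.isLt; omega⟩}

/-- The graph `H_{2n}`. -/
def H2n (n : ℕ) : SimpleGraph (Fin (2 * n) ⊕ Fin n × Fin 2) :=
  cliqueCoverConstruction (SimpleGraph.pathGraph (2 * n)) (evenCover n)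

/-! ### Auxiliary machinery -/

section Fiber

variable {ι T : Type*} [DecidableEq ι] [DecidableEq T]

/-- The fiber of a finite subset of a product over a point of the first factor. -/
def fiberSet (S : Finset (ι × T)) (i : ι) : Finset T :=
  (S.filter (fun p => p.1 = i)).image Prod.snd

lemma mem_fiberSet {S : Finset (ι × T)} {i : ι} {t : T} :
    t ∈ fiberSet S i ↔ (i, t) ∈ S := by
  simp only [fiberSet, Finset.mem_image, Finset.mem_filter]
  constructor
  · rintro ⟨⟨a, b⟩, ⟨hS, rfl⟩, rfl⟩; exact hS
  · intro h; exact ⟨(i, t), ⟨h, rfl⟩, rfl⟩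

lemma sum_card_fiberSet [Fintype ι] (S : Finset (ι × T)) :
    ∑ i, (fiberSet S i).card = S.card := by
  have h1 : ∀ i, (fiberSet S i).card = (S.filter (fun p => p.1 = i)).card := by
    intro i
    apply Finset.card_image_of_injOn
    intro p hp q hq hpq
    simp only [Finset.coe_filter, Set.mem_setOf_eq] at hp hq
    exact Prod.ext (hp.2.trans hq.2.symm) hpq
  simp_rw [h1]
  exact (Finset.card_eq_sum_card_fiberwise (fun x _ => Finset.mem_univ x.1)).symm

/-- The key factorization lemma: if domination of a graph `K` is equivalent, under an
identification of the vertices with `ι × T`, to a fiberwise condition `Q`, then the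
domination polynomial of `K` is the `|ι|`-th power of the polynomial attached to `Q`. -/
lemma domPoly_eq_pow {U : Type*} [Fintype U] [Fintype ι] [Fintype T]
    (K : SimpleGraph U) (e : U ≃ ι × T) (Q : Finset T → Prop) [DecidablePred Q]
    (h : ∀ S : Finset U, Dominates K S ↔ ∀ i, Q (fiberSet (S.map e.toEmbedding) i)) :
    domPoly K =
      (∑ A : Finset T, if Q A then (X : Polynomial ℤ) ^ A.card else 0) ^ Fintype.card ι := by
  have step1 : domPoly K = ∑ S' : Finset (ι × T),
      if (∀ i, Q (fiberSet S' i)) then (X : Polynomial ℤ) ^ S'.card else 0 := by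
    rw [domPoly]
    refine Fintype.sum_equiv (Equiv.finsetCongr e) _ _ ?_
    intro S
    rw [Equiv.finsetCongr_apply, Finset.card_map]
    by_cases hD : Dominates K S
    · rw [if_pos hD, if_pos ((h S).mp hD)]
    · rw [if_neg hD, if_neg (fun hq => hD ((h S).mpr hq))]
  have key : ∀ S' : Finset (ι × T),
      (if (∀ i, Q (fiberSet S' i)) then (X : Polynomial ℤ) ^ S'.card else 0)
        = ∏ i, if Q (fiberSet S' i) then (X : Polynomial ℤ) ^ (fiberSet S' i).card else 0 := by
    intro S'
    by_cases hq : ∀ i, Q (fiberSet S' i)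
    · rw [if_pos hq, ← sum_card_fiberSet S', ← Finset.prod_pow_eq_pow_sum]
      exact Finset.prod_congr rfl fun i _ => (if_pos (hq i)).symm
    · rw [if_neg hq]
      push_neg at hq
      obtain ⟨i0, hi0⟩ := hq
      refine (Finset.prod_eq_zero (Finset.mem_univ i0) ?_).symm
      exact if_neg hi0
  calc domPoly K
      = ∑ S' : Finset (ι × T),
          if (∀ i, Q (fiberSet S' i)) then (X : Polynomial ℤ) ^ S'.card else 0 := step1
    _ = ∑ S' : Finset (ι × T),
          ∏ i, if Q (fiberSet S' i) then (X : Polynomial ℤ) ^ (fiberSet S' i).card else 0 :=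
        Finset.sum_congr rfl fun S' _ => key S'
    _ = ∑ f ∈ Fintype.piFinset (fun _ : ι => (Finset.univ : Finset (Finset T))),
          ∏ i, if Q (f i) then (X : Polynomial ℤ) ^ (f i).card else 0 := by
        refine Finset.sum_nbij' (fun S' => fun i => fiberSet S' i)
          (fun f => Finset.univ.biUnion fun i => (f i).image fun t => (i, t))
          ?_ ?_ ?_ ?_ ?_
        · intro S' _
          simp [Fintype.mem_piFinset]
        · intro f _
          exact Finset.mem_univ _
        · intro S' _
          ext ⟨i, t⟩
          simp only [Finset.mem_biUnion, Finset.mem_image, Finset.mem_univ, true_and]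
          constructor
          · rintro ⟨i', t', ht', hh⟩
            simp only [Prod.mk.injEq] at hh
            obtain ⟨rfl, rfl⟩ := hh
            exact mem_fiberSet.mp ht'
          · intro hmem
            exact ⟨i, t, mem_fiberSet.mpr hmem, rfl⟩
        · intro f _
          funext i
          ext t
          rw [mem_fiberSet]
          simp only [Finset.mem_biUnion, Finset.mem_image, Finset.mem_univ, true_and]
          constructor
          · rintro ⟨i', t', ht', hh⟩
            simp only [Prod.mk.injEq] at hh
            obtain ⟨rfl, rfl⟩ := hh
            exact ht'
          · intro hmem
            exact ⟨i, t, hmem, rfl⟩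
        · intro S' _
          rfl
    _ = (∑ A : Finset T, if Q A then (X : Polynomial ℤ) ^ A.card else 0) ^ Fintype.card ι := by
        rw [Finset.sum_prod_piFinset (ι := ι) (Finset.univ : Finset (Finset T))
          (fun _ A => if Q A then (X : Polynomial ℤ) ^ A.card else 0),
          Finset.prod_const, Finset.card_univ]

end Fiber

section GadgetPoly

/-- Rewrite the gadget sum by grouping according to cardinality. -/
lemma sum_ite_Q {α : Type*} [Fintype α] [DecidableEq α] (Q : Finset α → Prop) [DecidablePred Q] :
    (∑ A : Finset α, if Q A then (X : Polynomial ℤ) ^ A.card else 0)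
      = ∑ k ∈ Finset.range (Fintype.card α + 1),
          ((Finset.univ.filter (fun A : Finset α => Q A ∧ A.card = k)).card : Polynomial ℤ)
            * X ^ k := by
  rw [← Finset.sum_filter]
  have hmap : ∀ A ∈ Finset.univ.filter Q, A.card ∈ Finset.range (Fintype.card α + 1) := by
    intro A _
    refine Finset.mem_range.mpr (Nat.lt_succ_of_le ?_)
    rw [← Finset.card_univ]
    exact Finset.card_le_univ A
  rw [← Finset.sum_fiberwise_of_maps_to hmap]
  refine Finset.sum_congr rfl fun k _ => ?_
  rw [Finset.filter_filter]
  have hcongr : ∀ A ∈ Finset.univ.filter (fun A : Finset α => Q A ∧ A.card = k),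
      (X : Polynomial ℤ) ^ A.card = X ^ k := by
    intro A hA
    rw [(Finset.mem_filter.mp hA).2.2]
  rw [Finset.sum_congr rfl hcongr, Finset.sum_const, nsmul_eq_mul]

end GadgetPoly

/-! ### The corona gadget -/

/-- The fiberwise condition for `G ∘ P₃`: either the root is in the set, or the
trace on the copy of `P₃` dominates it. -/
def Qc (A : Finset (Option (Fin 3))) : Prop :=
  none ∈ A ∨ ∀ w : Fin 3, some w ∉ A →
    ∃ w' : Fin 3, some w' ∈ A ∧ (w'.val + 1 = w.val ∨ w.val + 1 = w'.val)

instance : DecidablePred Qc := fun A => by unfold Qc; exact inferInstance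

/-- Identification of the vertices of `G ∘ H` with `V × Option W`. -/
def eC {V W : Type*} : (V ⊕ V × W) ≃ V × Option W where
  toFun := Sum.elim (fun v => (v, none)) (fun p => (p.1, some p.2))
  invFun := fun p => Option.elim p.2 (Sum.inl p.1) (fun w => Sum.inr (p.1, w))
  left_inv := by rintro (v | ⟨v, w⟩) <;> rfl
  right_inv := by rintro ⟨v, _ | w⟩ <;> rfl

lemma corona_char [DecidableEq V] (G : SimpleGraph V) (S : Finset (V ⊕ V × Fin 3)) :
    Dominates (corona G (SimpleGraph.pathGraph 3)) S ↔
      ∀ v, Qc (fiberSet (S.map (eC (V := V) (W := Fin 3)).toEmbedding) v) := by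
  have hnone : ∀ v : V,
      (none : Option (Fin 3)) ∈ fiberSet (S.map (eC (V := V) (W := Fin 3)).toEmbedding) v ↔
        Sum.inl v ∈ S := by
    intro v
    rw [mem_fiberSet, Finset.mem_map_equiv]
    exact Iff.rfl
  have hsome : ∀ (v : V) (w : Fin 3),
      some w ∈ fiberSet (S.map (eC (V := V) (W := Fin 3)).toEmbedding) v ↔
        Sum.inr (v, w) ∈ S := by
    intro v w
    rw [mem_fiberSet, Finset.mem_map_equiv]
    exact Iff.rfl
  constructor
  · intro hD v
    by_cases hv : Sum.inl v ∈ S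
    · exact Or.inl ((hnone v).mpr hv)
    · refine Or.inr fun w hw => ?_
      obtain ⟨u, huS, hadj⟩ :=
        hD (Sum.inr (v, w)) (fun hmem => hw ((hsome v w).mpr hmem))
      rcases u with a | ⟨b, w'⟩
      · have ha : a = v := hadj
        subst ha
        exact absurd huS hv
      · obtain ⟨hb, hp⟩ := (hadj : b = v ∧ (SimpleGraph.pathGraph 3).Adj w' w)
        subst hb
        exact ⟨w', (hsome _ w').mpr huS, SimpleGraph.pathGraph_adj.mp hp⟩
  · intro hQ x hx
    rcases x with v | ⟨v, w⟩
    · rcases hQ v with hno | hall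
      · exact absurd ((hnone v).mp hno) hx
      · by_cases h0 : Sum.inr (v, (0 : Fin 3)) ∈ S
        · exact ⟨Sum.inr (v, 0), h0, rfl⟩
        · obtain ⟨w', hw', _⟩ := hall 0 (fun hmem => h0 ((hsome v 0).mp hmem))
          exact ⟨Sum.inr (v, w'), (hsome v w').mp hw', rfl⟩
    · rcases hQ v with hno | hall
      · exact ⟨Sum.inl v, (hnone v).mp hno, rfl⟩
      · by_cases hw : Sum.inr (v, w) ∈ S
        · exact absurd hw hx
        · obtain ⟨w', hw', hp⟩ := hall w (fun hmem => hw ((hsome v w).mp hmem))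
          exact ⟨Sum.inr (v, w'), (hsome v w').mp hw',
            ⟨rfl, SimpleGraph.pathGraph_adj.mpr hp⟩⟩

open Classical in
lemma Qc_poly :
    (∑ A : Finset (Option (Fin 3)), if Qc A then (X : Polynomial ℤ) ^ A.card else 0)
      = X ^ 4 + 4 * X ^ 3 + 6 * X ^ 2 + 2 * X := by
  rw [sum_ite_Q]
  have hcard : Fintype.card (Option (Fin 3)) = 4 := by simp
  rw [hcard]
  have h0 : (Finset.univ.filter
      (fun A : Finset (Option (Fin 3)) => Qc A ∧ A.card = 0)).card = 0 := by decide
  have h1 : (Finset.univ.filter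
      (fun A : Finset (Option (Fin 3)) => Qc A ∧ A.card = 1)).card = 2 := by decide
  have h2 : (Finset.univ.filter
      (fun A : Finset (Option (Fin 3)) => Qc A ∧ A.card = 2)).card = 6 := by decide
  have h3 : (Finset.univ.filter
      (fun A : Finset (Option (Fin 3)) => Qc A ∧ A.card = 3)).card = 4 := by decide
  have h4 : (Finset.univ.filter
      (fun A : Finset (Option (Fin 3)) => Qc A ∧ A.card = 4)).card = 1 := by decide
  rw [Finset.sum_range_succ, Finset.sum_range_succ, Finset.sum_range_succ,
    Finset.sum_range_succ, Finset.sum_range_one, h0, h1, h2, h3, h4]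
  push_cast
  ring

/-! ### The `H₂ₙ` gadget -/

/-- Internal adjacency of the 4-vertex gadget of `H_{2n}`: the two path vertices are
adjacent to everything, the two pendant vertices only to the path vertices. -/
def gAdj : (Fin 2 ⊕ Fin 2) → (Fin 2 ⊕ Fin 2) → Prop
  | Sum.inl a, Sum.inl b => a ≠ b
  | Sum.inl _, Sum.inr _ => True
  | Sum.inr _, Sum.inl _ => True
  | Sum.inr _, Sum.inr _ => False

instance : DecidableRel gAdj := fun y x => by
  rcases y with a | a <;> rcases x with b | b
  · exact inferInstanceAs (Decidable (a ≠ b))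
  · exact inferInstanceAs (Decidable True)
  · exact inferInstanceAs (Decidable True)
  · exact inferInstanceAs (Decidable False)

/-- The fiberwise condition for `H_{2n}`: the trace on the gadget dominates the gadget. -/
def Qh (A : Finset (Fin 2 ⊕ Fin 2)) : Prop :=
  ∀ x ∉ A, ∃ y ∈ A, gAdj y x

instance : DecidablePred Qh := fun A => by unfold Qh; exact inferInstance

/-- Identification of the vertices of `H_{2n}` with `Fin n × (Fin 2 ⊕ Fin 2)`. -/
def eH (n : ℕ) : (Fin (2 * n) ⊕ Fin n × Fin 2) ≃ Fin n × (Fin 2 ⊕ Fin 2) where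
  toFun := Sum.elim
    (fun k => (⟨k.val / 2, by have := k.isLt; omega⟩, Sum.inl ⟨k.val % 2, by omega⟩))
    (fun p => (p.1, Sum.inr p.2))
  invFun := fun p => Sum.elim
    (fun s => Sum.inl ⟨2 * p.1.val + s.val,
      by have := p.1.isLt; have := s.isLt; omega⟩)
    (fun t => Sum.inr (p.1, t)) p.2
  left_inv := by
    rintro (k | ⟨i, t⟩)
    · simp only [Sum.elim_inl]
      congr 1
      apply Fin.ext
      show 2 * (k.val / 2) + k.val % 2 = k.val
      omega
    · rfl
  right_inv := by
    rintro ⟨i, s | t⟩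
    · have hs := s.isLt
      simp only [Sum.elim_inl]
      rw [Prod.mk.injEq]
      refine ⟨Fin.ext ?_, ?_⟩
      · show (2 * i.val + s.val) / 2 = i.val
        omega
      · show Sum.inl (⟨(2 * i.val + s.val) % 2, by omega⟩ : Fin 2) = Sum.inl s
        congr 1
        apply Fin.ext
        show (2 * i.val + s.val) % 2 = s.val
        omega
    · rfl

lemma H2n_char (n : ℕ) (S : Finset (Fin (2 * n) ⊕ Fin n × Fin 2)) :
    Dominates (H2n n) S ↔ ∀ i, Qh (fiberSet (S.map (eH n).toEmbedding) i) := by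
  have hL : ∀ (i : Fin n) (s : Fin 2),
      (Sum.inl s : Fin 2 ⊕ Fin 2) ∈ fiberSet (S.map (eH n).toEmbedding) i ↔
        Sum.inl (⟨2 * i.val + s.val,
          by have := i.isLt; have := s.isLt; omega⟩ : Fin (2 * n)) ∈ S := by
    intro i s
    rw [mem_fiberSet, Finset.mem_map_equiv]
    exact Iff.rfl
  have hR : ∀ (i : Fin n) (t : Fin 2),
      (Sum.inr t : Fin 2 ⊕ Fin 2) ∈ fiberSet (S.map (eH n).toEmbedding) i ↔
        Sum.inr (i, t) ∈ S := by
    intro i t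
    rw [mem_fiberSet, Finset.mem_map_equiv]
    exact Iff.rfl
  constructor
  · intro hD i x hx
    rcases x with s | t
    · -- path vertex of the gadget is not in the fiber
      by_cases h0 : Sum.inr (i, (0 : Fin 2)) ∈ S
      · exact ⟨Sum.inr 0, (hR i 0).mpr h0, trivial⟩
      · obtain ⟨u, huS, hadj⟩ := hD (Sum.inr (i, 0)) h0
        rcases u with a | ⟨j, t'⟩
        · have hmem : a ∈ evenCover n i := hadj
          simp only [evenCover, Finset.mem_insert, Finset.mem_singleton] at hmem
          rcases hmem with rfl | rfl
          · refine ⟨Sum.inl 0, (hL i 0).mpr huS, ?_⟩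
            show (0 : Fin 2) ≠ s
            intro hss
            subst hss
            exact hx ((hL i 0).mpr huS)
          · refine ⟨Sum.inl 1, (hL i 1).mpr huS, ?_⟩
            show (1 : Fin 2) ≠ s
            intro hss
            subst hss
            exact hx ((hL i 1).mpr huS)
        · have : False := hadj
          exact this.elim
    · -- pendant vertex of the gadget is not in the fiber
      obtain ⟨u, huS, hadj⟩ := hD (Sum.inr (i, t)) (fun hmem => hx ((hR i t).mpr hmem))
      rcases u with a | ⟨j, t'⟩
      · have hmem : a ∈ evenCover n i := hadj
        simp only [evenCover, Finset.mem_insert, Finset.mem_singleton] at hmem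
        rcases hmem with rfl | rfl
        · exact ⟨Sum.inl 0, (hL i 0).mpr huS, trivial⟩
        · exact ⟨Sum.inl 1, (hL i 1).mpr huS, trivial⟩
      · have : False := hadj
        exact this.elim
  · intro hQ x hx
    rcases x with a | ⟨i, t⟩
    · have ha := a.isLt
      have hfib : (Sum.inl (⟨a.val % 2, by omega⟩ : Fin 2) : Fin 2 ⊕ Fin 2) ∉
          fiberSet (S.map (eH n).toEmbedding) ⟨a.val / 2, by omega⟩ := by
        intro hmem
        apply hx
        have := (hL ⟨a.val / 2, by omega⟩ ⟨a.val % 2, by omega⟩).mp hmem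
        have heq : (⟨2 * (a.val / 2) + a.val % 2, by omega⟩ : Fin (2 * n)) = a :=
          Fin.ext (by show 2 * (a.val / 2) + a.val % 2 = a.val; omega)
        rwa [heq] at this
      obtain ⟨y, hy, hadjy⟩ := hQ ⟨a.val / 2, by omega⟩ _ hfib
      rcases y with s' | t'
      · have hne : s' ≠ ⟨a.val % 2, by omega⟩ := hadjy
        have hne' : s'.val ≠ a.val % 2 := fun h => hne (Fin.ext h)
        have hs' := s'.isLt
        refine ⟨Sum.inl ⟨2 * (a.val / 2) + s'.val, by omega⟩,
          (hL ⟨a.val / 2, by omega⟩ s').mp hy, ?_⟩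
        exact SimpleGraph.pathGraph_adj.mpr (by simp only []; omega)
      · refine ⟨Sum.inr (⟨a.val / 2, by omega⟩, t'),
          (hR ⟨a.val / 2, by omega⟩ t').mp hy, ?_⟩
        show a ∈ evenCover n (⟨a.val / 2, by omega⟩ : Fin n)
        simp only [evenCover, Finset.mem_insert, Finset.mem_singleton]
        rcases (by omega : a.val = 2 * (a.val / 2) ∨ a.val = 2 * (a.val / 2) + 1) with h | h
        · exact Or.inl (Fin.ext h)
        · exact Or.inr (Fin.ext h)
    · have hfib : (Sum.inr t : Fin 2 ⊕ Fin 2) ∉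
          fiberSet (S.map (eH n).toEmbedding) i := fun hmem => hx ((hR i t).mp hmem)
      obtain ⟨y, hy, hadjy⟩ := hQ i _ hfib
      rcases y with s' | t'
      · have hs' := s'.isLt
        have hi := i.isLt
        refine ⟨Sum.inl ⟨2 * i.val + s'.val, by omega⟩, (hL i s').mp hy, ?_⟩
        show (⟨2 * i.val + s'.val, by omega⟩ : Fin (2 * n)) ∈ evenCover n i
        simp only [evenCover, Finset.mem_insert, Finset.mem_singleton]
        rcases (by omega : s'.val = 0 ∨ s'.val = 1) with h | h
        · exact Or.inl (Fin.ext (by show 2 * i.val + s'.val = 2 * i.val; omega))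
        · exact Or.inr (Fin.ext (by show 2 * i.val + s'.val = 2 * i.val + 1; omega))
      · have : False := hadjy
        exact this.elim

open Classical in
lemma Qh_poly :
    (∑ A : Finset (Fin 2 ⊕ Fin 2), if Qh A then (X : Polynomial ℤ) ^ A.card else 0)
      = X ^ 4 + 4 * X ^ 3 + 6 * X ^ 2 + 2 * X := by
  rw [sum_ite_Q]
  have hcard : Fintype.card (Fin 2 ⊕ Fin 2) = 4 := by simp
  rw [hcard]
  have h0 : (Finset.univ.filter
      (fun A : Finset (Fin 2 ⊕ Fin 2) => Qh A ∧ A.card = 0)).card = 0 := by decide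
  have h1 : (Finset.univ.filter
      (fun A : Finset (Fin 2 ⊕ Fin 2) => Qh A ∧ A.card = 1)).card = 2 := by decide
  have h2 : (Finset.univ.filter
      (fun A : Finset (Fin 2 ⊕ Fin 2) => Qh A ∧ A.card = 2)).card = 6 := by decide
  have h3 : (Finset.univ.filter
      (fun A : Finset (Fin 2 ⊕ Fin 2) => Qh A ∧ A.card = 3)).card = 4 := by decide
  have h4 : (Finset.univ.filter
      (fun A : Finset (Fin 2 ⊕ Fin 2) => Qh A ∧ A.card = 4)).card = 1 := by decide
  rw [Finset.sum_range_succ, Finset.sum_range_succ, Finset.sum_range_succ,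
    Finset.sum_range_succ, Finset.sum_range_one, h0, h1, h2, h3, h4]
  push_cast
  ring

/-- `G ∘ P₃` and `H_{2n}` have the same domination polynomial, namely
`(x⁴+4x³+6x²+2x)ⁿ`, where `n = |V(G)| ≥ 1`. -/
theorem domPoly_corona_path3 {V : Type*} [Fintype V] (G : SimpleGraph V)
    (hn : 1 ≤ Fintype.card V) :
    domPoly (corona G (SimpleGraph.pathGraph 3)) =
        (X ^ 4 + 4 * X ^ 3 + 6 * X ^ 2 + 2 * X) ^ Fintype.card V ∧
      (X ^ 4 + 4 * X ^ 3 + 6 * X ^ 2 + 2 * X) ^ Fintype.card V =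
        domPoly (H2n (Fintype.card V)) := by
  classical
  constructor
  · rw [domPoly_eq_pow (corona G (SimpleGraph.pathGraph 3)) (eC (V := V) (W := Fin 3)) Qc
      (corona_char G), Qc_poly]
  · rw [domPoly_eq_pow (H2n (Fintype.card V)) (eH (Fintype.card V)) Qh
      (H2n_char (Fintype.card V)), Qh_poly, Fintype.card_fin]
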